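/- Let X ∈ ℕ, X = {−X,…,X}, and let S ∈ (X^d × {−1,1})^* be a realizable dataset of labeled grid points, i.e., there exists a halfspace hs ⊂ ℝ^d such that every (x,1) ∈ S satisfies x ∈ hs and every (x,−1) ∈ S satisfies x ∉ hs. Then there exists a halfspace hs' with val_S(hs') = |S| such that every point x appearing in S satisfies dist(x, ∂hs') ≥ 1/X', where X' = 2d²·(d!)^{d³}·X^{d⁶}. Equivalently, a perfectly classifying halfspace exists with margin at least 1/(d·X)^{poly(d)}. -/

import Mathlib

open Finset Submodule

notation "⟪" x ", " y "⟫" => inner (𝕜 := ℝ) x y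


lemma abs_det_le {ι : Type*} [Fintype ι] [DecidableEq ι] (A : Matrix ι ι ℝ) (m : ℝ)
     (h : ∀ i j, |A i j| ≤ m) :
    |A.det| ≤ (Fintype.card ι).factorial * m ^ (Fintype.card ι) := by
  rw [Matrix.det_apply]
  calc |∑ σ : Equiv.Perm ι, Equiv.Perm.sign σ • ∏ i, A (σ i) i|
      ≤ ∑ σ : Equiv.Perm ι, |Equiv.Perm.sign σ • ∏ i, A (σ i) i| := Finset.abs_sum_le_sum_abs _ _
    _ ≤ ∑ _σ : Equiv.Perm ι, m ^ (Fintype.card ι) := by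
        refine Finset.sum_le_sum fun σ _ => ?_
        rw [Units.smul_def, zsmul_eq_mul, abs_mul]
        have h1 : |((Equiv.Perm.sign σ : ℤ) : ℝ)| = 1 := by
          rcases Int.units_eq_one_or (Equiv.Perm.sign σ) with h' | h' <;> simp [h']
        rw [h1, one_mul]
        calc |∏ i, A (σ i) i| = ∏ i, |A (σ i) i| := by rw [Finset.abs_prod]
          _ ≤ ∏ _i : ι, m := Finset.prod_le_prod (fun _ _ => abs_nonneg _) (fun i _ => h _ _)
          _ = m ^ (Fintype.card ι) := by rw [Finset.prod_const, Finset.card_univ]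
    _ = (Fintype.card ι).factorial * m ^ (Fintype.card ι) := by
        rw [Finset.sum_const, Finset.card_univ, Fintype.card_perm, nsmul_eq_mul]

noncomputable def emb {n : ℕ} (z : Fin n → ℤ) : EuclideanSpace ℝ (Fin n) := WithLp.toLp 2 (fun j => (z j : ℝ))

lemma inner_emb {n : ℕ} (b : EuclideanSpace ℝ (Fin n)) (z : Fin n → ℤ) :
    ⟪b, emb z⟫ = ∑ j, b j * (z j : ℝ) := by
  simp [emb, PiLp.inner_apply, RCLike.inner_apply, mul_comm]

lemma inner_emb_emb {n : ℕ} (z z' : Fin n → ℤ) :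
    ⟪emb z, emb z'⟫ = ((∑ j, z j * z' j : ℤ) : ℝ) := by
  push_cast
  simp [emb, PiLp.inner_apply, RCLike.inner_apply, mul_comm]


lemma max_rank_solution {n : ℕ} (VE : Finset (EuclideanSpace ℝ (Fin n)))
    (hfeas : ∃ b, ∀ v ∈ VE, (1:ℝ) ≤ ⟪b, v⟫) :
    ∃ b, (∀ v ∈ VE, (1:ℝ) ≤ ⟪b, v⟫) ∧
      span ℝ {v | v ∈ VE ∧ ⟪b, v⟫ = (1:ℝ)} = span ℝ (VE : Set (EuclideanSpace ℝ (Fin n))) := by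
  classical
  have hRne : (Set.Nonempty {k | ∃ b, (∀ v ∈ VE, (1:ℝ) ≤ ⟪b, v⟫) ∧
      k = Module.finrank ℝ (span ℝ {v | v ∈ VE ∧ ⟪b, v⟫ = (1:ℝ)})}) := by
    obtain ⟨b, hb⟩ := hfeas
    exact ⟨_, b, hb, rfl⟩
  have hRbdd : BddAbove {k | ∃ b, (∀ v ∈ VE, (1:ℝ) ≤ ⟪b, v⟫) ∧
      k = Module.finrank ℝ (span ℝ {v | v ∈ VE ∧ ⟪b, v⟫ = (1:ℝ)})} := by
    refine ⟨n, fun k hk => ?_⟩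
    obtain ⟨b, _, rfl⟩ := hk
    have h2 := Submodule.finrank_le (span ℝ {v | v ∈ VE ∧ ⟪b, v⟫ = (1:ℝ)})
    simpa [finrank_euclideanSpace] using h2
  obtain ⟨b, hbfeas, hbrank⟩ := Nat.sSup_mem hRne hRbdd
  have hmax : ∀ b', (∀ v ∈ VE, (1:ℝ) ≤ ⟪b', v⟫) →
      Module.finrank ℝ (span ℝ {v | v ∈ VE ∧ ⟪b', v⟫ = (1:ℝ)}) ≤
      Module.finrank ℝ (span ℝ {v | v ∈ VE ∧ ⟪b, v⟫ = (1:ℝ)}) := by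
    intro b' hb'
    rw [← hbrank]
    exact le_csSup hRbdd ⟨b', hb', rfl⟩
  clear hbrank
  refine ⟨b, hbfeas, ?_⟩
  by_contra hne
  have hUW : span ℝ {v | v ∈ VE ∧ ⟪b, v⟫ = (1:ℝ)} < span ℝ (VE : Set (EuclideanSpace ℝ (Fin n))) :=
    lt_of_le_of_ne (span_mono fun v hv => hv.1) hne
  have hWU : span ℝ (VE : Set (EuclideanSpace ℝ (Fin n))) =
      span ℝ {v | v ∈ VE ∧ ⟪b, v⟫ = (1:ℝ)} ⊔
      (span ℝ (VE : Set (EuclideanSpace ℝ (Fin n))) ⊓ (span ℝ {v | v ∈ VE ∧ ⟪b, v⟫ = (1:ℝ)})ᗮ) := by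
    have h1 : span ℝ {v | v ∈ VE ∧ ⟪b, v⟫ = (1:ℝ)} ⊔ (span ℝ {v | v ∈ VE ∧ ⟪b, v⟫ = (1:ℝ)})ᗮ = ⊤ :=
      Submodule.sup_orthogonal_of_hasOrthogonalProjection
    have h2 := inf_sup_assoc_of_le (x := span ℝ (VE : Set (EuclideanSpace ℝ (Fin n))))
      (y := (span ℝ {v | v ∈ VE ∧ ⟪b, v⟫ = (1:ℝ)})ᗮ)
      (z := span ℝ {v | v ∈ VE ∧ ⟪b, v⟫ = (1:ℝ)}) hUW.le
    rw [sup_comm, h2, sup_comm _ (span ℝ {v | v ∈ VE ∧ ⟪b, v⟫ = (1:ℝ)}), h1, inf_top_eq]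
  have hne' : span ℝ (VE : Set (EuclideanSpace ℝ (Fin n))) ⊓
      (span ℝ {v | v ∈ VE ∧ ⟪b, v⟫ = (1:ℝ)})ᗮ ≠ ⊥ := by
    intro h
    rw [h, sup_bot_eq] at hWU
    exact hne hWU.symm
  obtain ⟨r, hrmem, hrne⟩ := Submodule.exists_mem_ne_zero_of_ne_bot hne'
  have key : ∀ r', r' ∈ span ℝ (VE : Set (EuclideanSpace ℝ (Fin n))) ⊓
      (span ℝ {v | v ∈ VE ∧ ⟪b, v⟫ = (1:ℝ)})ᗮ → r' ≠ 0 →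
      (∃ v ∈ VE, ⟪r', v⟫ < (0:ℝ)) → False := by
    intro r' hr'mem hr'ne hexneg
    obtain ⟨v₀, hv₀, hv₀neg⟩ := hexneg
    have hr'orth : ∀ v ∈ {v | v ∈ VE ∧ ⟪b, v⟫ = (1:ℝ)}, ⟪r', v⟫ = (0:ℝ) := by
      intro v hv
      have hv' : v ∈ span ℝ {v | v ∈ VE ∧ ⟪b, v⟫ = (1:ℝ)} := subset_span hv
      have := (Submodule.mem_orthogonal _ r').mp hr'mem.2 v hv'
      rwa [real_inner_comm] at this
    -- the set of constraints decreasing along r'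
    have hFne : (VE.filter (fun v => ⟪r', v⟫ < (0:ℝ))).Nonempty :=
      ⟨v₀, Finset.mem_filter.mpr ⟨hv₀, hv₀neg⟩⟩
    set t := (VE.filter (fun v => ⟪r', v⟫ < (0:ℝ))).inf' hFne
      (fun v => (⟪b, v⟫ - 1) / (-⟪r', v⟫)) with ht
    have ht0 : 0 ≤ t := by
      rw [ht]
      apply Finset.le_inf'
      intro v hv
      rw [Finset.mem_filter] at hv
      have h1 : (1:ℝ) ≤ ⟪b, v⟫ := hbfeas v hv.1
      have h2 : (0:ℝ) < -⟪r', v⟫ := by linarith [hv.2]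
      apply div_nonneg <;> linarith
    have hfeas' : ∀ v ∈ VE, (1:ℝ) ≤ ⟪b + t • r', v⟫ := by
      intro v hv
      rw [inner_add_left, real_inner_smul_left]
      rcases lt_or_ge (⟪r', v⟫ : ℝ) 0 with hneg | hpos
      · have hvF : v ∈ VE.filter (fun v => ⟪r', v⟫ < (0:ℝ)) := Finset.mem_filter.mpr ⟨hv, hneg⟩
        have hle : t ≤ (⟪b, v⟫ - 1) / (-⟪r', v⟫) := by
          rw [ht]; exact Finset.inf'_le _ hvF
        have h2 : (0:ℝ) < -⟪r', v⟫ := by linarith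
        rw [le_div_iff₀ h2] at hle
        nlinarith
      · have := hbfeas v hv
        nlinarith
    -- minimizer v*
    obtain ⟨vs, hvsF, hvs⟩ := Finset.exists_mem_eq_inf' hFne (fun v => (⟪b, v⟫ - 1) / (-⟪r', v⟫))
    rw [Finset.mem_filter] at hvsF
    have hvstight : ⟪b + t • r', vs⟫ = (1:ℝ) := by
      rw [inner_add_left, real_inner_smul_left, ht, hvs]
      set x := (⟪r', vs⟫ : ℝ) with hxdef
      set y := (⟪b, vs⟫ : ℝ) with hydef
      have h2 : x < 0 := hvsF.2
      have h3 : x ≠ 0 := ne_of_lt h2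
      have h4 : (y - 1) / -x * x = 1 - y := by
        rw [div_mul_eq_mul_div, div_eq_iff (neg_ne_zero.mpr h3)]
        ring
      rw [h4]
      ring
    -- tight set only grows
    have hsub : {v | v ∈ VE ∧ ⟪b, v⟫ = (1:ℝ)} ⊆ {v | v ∈ VE ∧ ⟪b + t • r', v⟫ = (1:ℝ)} := by
      intro v hv
      refine ⟨hv.1, ?_⟩
      rw [inner_add_left, real_inner_smul_left, hr'orth v hv, hv.2]
      ring
    have hvs_notmem : vs ∉ span ℝ {v | v ∈ VE ∧ ⟪b, v⟫ = (1:ℝ)} := by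
      intro hmem
      have := (Submodule.mem_orthogonal _ r').mp hr'mem.2 vs hmem
      rw [real_inner_comm] at this
      exact absurd this (ne_of_lt hvsF.2)
    have hlt : span ℝ {v | v ∈ VE ∧ ⟪b, v⟫ = (1:ℝ)} <
        span ℝ {v | v ∈ VE ∧ ⟪b + t • r', v⟫ = (1:ℝ)} := by
      refine lt_of_le_of_ne (span_mono hsub) ?_
      intro heq
      apply hvs_notmem
      rw [heq]
      exact subset_span ⟨hvsF.1, hvstight⟩
    have := Submodule.finrank_lt_finrank_of_lt hlt
    have := hmax (b + t • r') hfeas'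
    omega
  have hex : ∃ v ∈ VE, ⟪r, v⟫ ≠ (0:ℝ) := by
    by_contra h
    push_neg at h
    have hr0 : r ∈ (span ℝ (VE : Set (EuclideanSpace ℝ (Fin n))))ᗮ := by
      rw [Submodule.mem_orthogonal]
      intro u hu
      induction hu using Submodule.span_induction with
      | mem x hx => rw [real_inner_comm]; exact h x hx
      | zero => simp
      | add x y _ _ hx hy => rw [inner_add_left, hx, hy]; ring
      | smul c x _ hx => rw [real_inner_smul_left, hx]; ring
    have : r = 0 := by
      have h1 := hrmem.1
      have := (Submodule.mem_orthogonal _ r).mp hr0 r h1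
      exact inner_self_eq_zero.mp this
    exact hrne this
  obtain ⟨v₁, hv₁, hv₁ne⟩ := hex
  rcases lt_or_gt_of_ne hv₁ne with hlt | hgt
  · exact key r hrmem hrne ⟨v₁, hv₁, hlt⟩
  · refine key (-r) (neg_mem hrmem) (neg_ne_zero.mpr hrne) ⟨v₁, hv₁, ?_⟩
    rw [inner_neg_left]
    linarith

lemma exists_bounded_solution {n B : ℕ} (hB : 1 ≤ B) (V : Finset (Fin n → ℤ))
    (hVB : ∀ v ∈ V, ∀ j, |v j| ≤ (B:ℤ))
    (hfeas : ∃ b : Fin n → ℝ, ∀ v ∈ V, 1 ≤ ∑ j, b j * (v j : ℝ)) :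
    ∃ b : Fin n → ℝ, (∀ v ∈ V, 1 ≤ ∑ j, b j * (v j : ℝ)) ∧
      ∀ j, |b j| ≤ ((n * Nat.factorial n * (n * B^2)^n * B : ℕ) : ℝ) := by
  classical
  set E := EuclideanSpace ℝ (Fin n) with hE
  have hfeasE : ∃ b : E, ∀ v ∈ V.image emb, (1:ℝ) ≤ ⟪b, v⟫ := by
    obtain ⟨b, hb⟩ := hfeas
    refine ⟨(WithLp.equiv 2 (Fin n → ℝ)).symm b, fun v hv => ?_⟩
    obtain ⟨z, hz, rfl⟩ := Finset.mem_image.mp hv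
    rw [inner_emb]
    exact hb z hz
  obtain ⟨b1, hb1feas, hb1span⟩ := max_rank_solution (V.image emb) hfeasE
  set W := span ℝ ((V.image emb : Finset E) : Set E) with hW
  set b0 : E := (orthogonalProjection W b1 : E) with hb0
  have hb0inner : ∀ v : E, v ∈ W → ⟪b0, v⟫ = ⟪b1, v⟫ := by
    intro v hv
    have h1 : b1 - b0 ∈ Wᗮ := Submodule.sub_starProjection_mem_orthogonal (K := W) b1
    have h2 := (Submodule.mem_orthogonal W _).mp h1 v hv
    rw [inner_sub_right] at h2
    have h3 : ⟪v, b0⟫ = ⟪v, b1⟫ := by rw [hb0]; linarith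
    linarith [real_inner_comm b0 v, real_inner_comm b1 v, h3]
  have hb0feas : ∀ v ∈ V.image emb, (1:ℝ) ≤ ⟪b0, v⟫ := fun v hv => by
    rw [hb0inner v (subset_span hv)]; exact hb1feas v hv
  have hb0tight : ∀ v ∈ {v | v ∈ V.image emb ∧ ⟪b1, v⟫ = (1:ℝ)}, ⟪b0, v⟫ = (1:ℝ) := by
    intro v hv
    rw [hb0inner v (subset_span hv.1)]; exact hv.2
  have hb0memW : b0 ∈ W := SetLike.coe_mem _
  -- extract independent spanning subset of the tight set
  obtain ⟨tset, htsub, htspan, htind⟩ :=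
    exists_linearIndependent ℝ {v | v ∈ V.image emb ∧ ⟪b1, v⟫ = (1:ℝ)}
  have htfin : tset.Finite :=
    Set.Finite.subset (V.image emb).finite_toSet (fun v hv => (htsub hv).1)
  haveI : Fintype ↥tset := htfin.fintype
  have hcard : Fintype.card ↥tset ≤ n := by
    have h := htind.fintype_card_le_finrank
    simpa [finrank_euclideanSpace] using h
  have hb0span : b0 ∈ span ℝ (Set.range (Subtype.val : tset → E)) := by
    rw [Subtype.range_coe, htspan, hb1span]
    exact hb0memW
  obtain ⟨c, hc⟩ := (mem_span_range_iff_exists_fun ℝ).mp hb0span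
  -- integer representatives
  have hrep : ∀ i : ↥tset, ∃ z, z ∈ V ∧ emb z = (i : E) := by
    intro i
    have h1 : (i : E) ∈ V.image emb := (htsub i.2).1
    obtain ⟨z, hz, hze⟩ := Finset.mem_image.mp h1
    exact ⟨z, hz, hze⟩
  choose zf hzfV hzfemb using hrep
  -- Gram matrix
  set G : Matrix ↥tset ↥tset ℝ := fun i j => ⟪(j : E), (i : E)⟫ with hG
  set G' : Matrix ↥tset ↥tset ℤ := fun i j => ∑ k, zf j k * zf i k with hG'
  have hGmap : G = (Int.castRingHom ℝ).mapMatrix G' := by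
    ext i j
    rw [RingHom.mapMatrix_apply, Matrix.map_apply]
    show ⟪(j : E), (i : E)⟫ = ((G' i j : ℤ) : ℝ)
    rw [← hzfemb i, ← hzfemb j, inner_emb_emb]
  have expand : ∀ (u : ↥tset → ℝ) (i : ↥tset),
      G.mulVec u i = ∑ j : ↥tset, u j * ⟪(j : E), (i : E)⟫ := by
    intro u i
    have h0 : G.mulVec u i = ∑ j : ↥tset, G i j * u j := rfl
    rw [h0]
    exact Finset.sum_congr rfl fun j _ => mul_comm _ _
  have hmulVec : G.mulVec c = fun _ => (1:ℝ) := by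
    funext i
    have h1 : ⟪b0, (i : E)⟫ = 1 := hb0tight _ (htsub i.2)
    rw [← hc, sum_inner] at h1
    simp only [real_inner_smul_left] at h1
    rw [expand]
    exact h1
  have hGdet : G.det ≠ 0 := by
    intro hdet
    obtain ⟨u, hu0, huv⟩ := Matrix.exists_mulVec_eq_zero_iff.mpr hdet
    set x : E := ∑ i : ↥tset, u i • (i : E) with hx
    have hxi : ∀ i : ↥tset, ⟪x, (i : E)⟫ = 0 := by
      intro i
      have h1 : G.mulVec u i = 0 := by rw [huv]; rfl
      rw [expand] at h1
      rw [hx, sum_inner]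
      simp only [real_inner_smul_left]
      exact h1
    have hxx : ⟪x, x⟫ = (0:ℝ) := by
      rw [hx, inner_sum]
      simp only [real_inner_smul_right]
      rw [← hx]
      exact Finset.sum_eq_zero fun i _ => by rw [hxi i]; ring
    have hx0 : x = 0 := inner_self_eq_zero.mp hxx
    have := Fintype.linearIndependent_iff.mp htind u (by rw [← hx]; exact hx0)
    exact hu0 (funext this)
  have hdetint : G.det = ((G'.det : ℤ) : ℝ) := by
    rw [hGmap, ← RingHom.map_det]; rfl
  have hdet1 : (1:ℝ) ≤ |G.det| := by
    rw [hdetint]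
    have h1 : G'.det ≠ 0 := by
      intro h; rw [hdetint, h] at hGdet; exact hGdet (by norm_num)
    have := Int.one_le_abs h1
    exact_mod_cast this
  have hinj : ∀ u u' : ↥tset → ℝ, G.mulVec u = G.mulVec u' → u = u' := by
    intro u u' h
    by_contra hne
    apply hGdet
    rw [← Matrix.exists_mulVec_eq_zero_iff]
    exact ⟨u - u', sub_ne_zero.mpr hne, by rw [Matrix.mulVec_sub, h, sub_self]⟩
  have hcram : G.det • c = G.cramer (fun _ => (1:ℝ)) := by
    apply hinj
    rw [Matrix.mulVec_smul, hmulVec, Matrix.mulVec_cramer]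
  have hGentry : ∀ i j, |G i j| ≤ ((n * B^2 : ℕ) : ℝ) := by
    intro i j
    rw [hGmap, RingHom.mapMatrix_apply, Matrix.map_apply]
    have h1 : |G' i j| ≤ ((n * B^2 : ℕ) : ℤ) := by
      rw [hG']
      calc |∑ k, zf j k * zf i k| ≤ ∑ k, |zf j k * zf i k| := Finset.abs_sum_le_sum_abs _ _
        _ ≤ ∑ _k : Fin n, ((B^2 : ℕ) : ℤ) := by
            refine Finset.sum_le_sum fun k _ => ?_
            rw [abs_mul]
            push_cast
            have := hVB _ (hzfV j) k
            have := hVB _ (hzfV i) k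
            nlinarith [abs_nonneg (zf j k), abs_nonneg (zf i k)]
        _ = ((n * B^2 : ℕ) : ℤ) := by
            rw [Finset.sum_const, Finset.card_univ, Fintype.card_fin, nsmul_eq_mul]
            push_cast
            ring
    calc |((G' i j : ℤ) : ℝ)| = ((|G' i j| : ℤ) : ℝ) := by rw [Int.cast_abs]
      _ ≤ ((n * B^2 : ℕ) : ℝ) := by exact_mod_cast h1
  have hcbound : ∀ i, |c i| ≤ ((Nat.factorial n * (n * B^2)^n : ℕ) : ℝ) := by
    intro i
    have hn1 : 1 ≤ n := by
      have : 0 < Fintype.card ↥tset := Fintype.card_pos_iff.mpr ⟨i⟩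
      omega
    have hnB : (1:ℝ) ≤ ((n * B^2 : ℕ) : ℝ) := by
      have : 1 ≤ n * B^2 := Nat.one_le_iff_ne_zero.mpr (by positivity)
      exact_mod_cast this
    have h1 : |G.det * c i| = |(G.cramer (fun _ => (1:ℝ))) i| := by
      rw [← hcram, Pi.smul_apply, smul_eq_mul]
    have h2 : |(G.cramer (fun _ => (1:ℝ))) i| ≤
        (Fintype.card ↥tset).factorial * ((n * B^2 : ℕ) : ℝ) ^ (Fintype.card ↥tset) := by
      rw [Matrix.cramer_apply]
      apply abs_det_le
      intro i' j'
      rw [Matrix.updateCol_apply]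
      split
      · rw [abs_one]; exact hnB
      · exact hGentry i' j'
    have h3 : ((Fintype.card ↥tset).factorial : ℝ) * ((n * B^2 : ℕ) : ℝ) ^ (Fintype.card ↥tset)
        ≤ ((Nat.factorial n * (n * B^2)^n : ℕ) : ℝ) := by
      have h3n : (Fintype.card ↥tset).factorial * (n * B^2)^(Fintype.card ↥tset)
          ≤ Nat.factorial n * (n * B^2)^n :=
        Nat.mul_le_mul (Nat.factorial_le hcard)
          (Nat.pow_le_pow_right (by positivity) hcard)
      calc ((Fintype.card ↥tset).factorial : ℝ) * ((n * B^2 : ℕ) : ℝ) ^ (Fintype.card ↥tset)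
          = (((Fintype.card ↥tset).factorial * (n * B^2)^(Fintype.card ↥tset) : ℕ) : ℝ) := by
            push_cast; ring
        _ ≤ _ := Nat.cast_le.mpr h3n
    have h4 : |c i| ≤ |G.det * c i| := by
      rw [abs_mul]
      nlinarith [abs_nonneg (c i)]
    linarith [h1 ▸ h4, le_trans h2 h3]
  -- conclude
  refine ⟨fun j => b0 j, fun v hv => ?_, fun j => ?_⟩
  · have h := hb0feas (emb v) (Finset.mem_image_of_mem _ hv)
    rwa [inner_emb] at h
  · have happ : b0 j = ∑ i : ↥tset, c i * (i : E) j := by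
      rw [← hc, WithLp.ofLp_sum]; exact Finset.sum_apply j Finset.univ _
    have hvalbound : ∀ i : ↥tset, |(i : E) j| ≤ (B : ℝ) := by
      intro i
      rw [← hzfemb i]
      show |((zf i j : ℤ) : ℝ)| ≤ (B : ℝ)
      have := hVB _ (hzfV i) j
      rw [← Int.cast_abs]
      exact_mod_cast this
    calc |b0 j| = |∑ i : ↥tset, c i * (i : E) j| := by rw [happ]
      _ ≤ ∑ i : ↥tset, |c i * (i : E) j| := Finset.abs_sum_le_sum_abs _ _
      _ ≤ ∑ _i : ↥tset, ((Nat.factorial n * (n * B^2)^n : ℕ) : ℝ) * (B : ℝ) := by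
          refine Finset.sum_le_sum fun i _ => ?_
          rw [abs_mul]
          exact mul_le_mul (hcbound i) (hvalbound i) (abs_nonneg _) (by positivity)
      _ = (Fintype.card ↥tset) * (((Nat.factorial n * (n * B^2)^n : ℕ) : ℝ) * (B : ℝ)) := by
          rw [Finset.sum_const, Finset.card_univ, nsmul_eq_mul]
      _ = ((Fintype.card ↥tset * (Nat.factorial n * (n * B^2)^n * B) : ℕ) : ℝ) := by
          push_cast; ring
      _ ≤ ((n * Nat.factorial n * (n * B^2)^n * B : ℕ) : ℝ) := by
          apply Nat.cast_le.mpr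
          calc Fintype.card ↥tset * (Nat.factorial n * (n * B^2)^n * B)
              ≤ n * (Nat.factorial n * (n * B^2)^n * B) := Nat.mul_le_mul_right _ hcard
            _ = n * Nat.factorial n * (n * B^2)^n * B := by ring

-- nat bound for d ≥ 2
lemma succ_le_fact' {d : ℕ} (hd : 3 ≤ d) : d + 1 ≤ d.factorial := by
  have h1 : d.factorial = d * (d-1).factorial := by
    cases d with
    | zero => omega
    | succ k => simp [Nat.factorial_succ]
  have h2 : 2 ≤ (d-1).factorial := by
    have : (2:ℕ).factorial ≤ (d-1).factorial := Nat.factorial_le (by omega)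
    simpa [Nat.factorial] using this
  nlinarith

lemma nat_bound {d X : ℕ} (hd : 2 ≤ d) (hX : 1 ≤ X) :
    d * ((d+1) * (d+1).factorial * ((d+1) * X^2)^(d+1) * X)
      ≤ 2 * d^2 * (d.factorial)^(d^3) * X^(d^6) := by
  have hfd : 1 ≤ d.factorial := Nat.one_le_iff_ne_zero.mpr (Nat.factorial_ne_zero d)
  have hcube : d + 5 ≤ d^3 := by nlinarith [sq_nonneg d]
  have hsix : 2*d + 3 ≤ d^6 := by
    have e1 : 4 ≤ d^2 := by nlinarith
    have e2 : d^6 = d^2 * d^2 * d^2 := by ring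
    nlinarith
  have key : (d+1)^(d+4) ≤ 2 * d^2 * (d.factorial)^(d^3 - 1) := by
    rcases Nat.lt_or_ge d 3 with h3 | h3
    · have hd2 : d = 2 := by omega
      subst hd2
      norm_num [Nat.factorial]
    · calc (d+1)^(d+4) ≤ (d.factorial)^(d+4) :=
            Nat.pow_le_pow_left (succ_le_fact' h3) _
        _ ≤ (d.factorial)^(d^3 - 1) := Nat.pow_le_pow_right hfd (by omega)
        _ ≤ 2 * d^2 * (d.factorial)^(d^3 - 1) :=
            Nat.le_mul_of_pos_left _ (by positivity)
  have hexp : d + 4 = 3 + (d+1) := by omega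
  calc d * ((d+1) * (d+1).factorial * ((d+1) * X^2)^(d+1) * X)
      = (d * (d+1) * (d+1) * d.factorial * (d+1)^(d+1)) * (X^(2*(d+1)) * X) := by
        rw [mul_pow, Nat.factorial_succ, ← pow_mul]
        ring
    _ ≤ ((d+1)^(d+4) * d.factorial) * (X^(2*(d+1)) * X) := by
        apply Nat.mul_le_mul_right
        calc d * (d+1) * (d+1) * d.factorial * (d+1)^(d+1)
            ≤ (d+1)^3 * d.factorial * (d+1)^(d+1) := by
              refine Nat.mul_le_mul_right _ (Nat.mul_le_mul_right _ ?_)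
              nlinarith
          _ = (d+1)^(d+4) * d.factorial := by rw [hexp, pow_add]; ring
    _ = ((d+1)^(d+4) * d.factorial) * X^(2*d+3) := by
        rw [← pow_succ]
        ring_nf
    _ ≤ (2 * d^2 * (d.factorial)^(d^3 - 1) * d.factorial) * X^(d^6) :=
        Nat.mul_le_mul (Nat.mul_le_mul_right _ key) (Nat.pow_le_pow_right hX hsix)
    _ = 2 * d^2 * (d.factorial)^(d^3) * X^(d^6) := by
        have h2 : (d.factorial)^(d^3 - 1) * d.factorial = (d.factorial)^(d^3) := by
          rw [← pow_succ]
          congr 1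
          omega
        rw [mul_assoc (2*d^2), h2]

-- half-integer distance lemma
lemma half_int_dist (q M : ℤ) : (1:ℝ)/2 ≤ |(q:ℝ) - ((M:ℝ) + 1/2)| := by
  rcases le_or_gt q M with h | h
  · have : (q:ℝ) ≤ (M:ℝ) := by exact_mod_cast h
    rw [abs_sub_comm, abs_of_nonneg (by linarith)]
    linarith
  · have : (M:ℝ) + 1 ≤ (q:ℝ) := by exact_mod_cast h
    rw [abs_of_nonneg (by linarith)]
    linarith

def fvec {d : ℕ} (p : (Fin d → ℤ) × Bool) : Fin (d+1) → ℤ :=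
  fun j => (if p.2 then 1 else -1) * (Fin.snoc p.1 1 : Fin (d+1) → ℤ) j

lemma fvec_sum {d : ℕ} (b : Fin (d+1) → ℝ) (p : (Fin d → ℤ) × Bool) :
    ∑ j, b j * (fvec p j : ℝ)
      = (if p.2 then (1:ℝ) else -1) *
        ((∑ i, b (Fin.castSucc i) * (p.1 i : ℝ)) + b (Fin.last d)) := by
  unfold fvec
  rw [Fin.sum_univ_castSucc]
  cases hb : p.2 <;>
    · simp [hb, Fin.snoc_castSucc, Fin.snoc_last, Finset.mul_sum, mul_comm, mul_left_comm]
      try ring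

theorem stmt_6 {d X : ℕ} (S : Multiset ((Fin d → ℤ) × Bool))
    (hgrid : ∀ p ∈ S, ∀ j, |p.1 j| ≤ (X : ℤ))
    (hrealizable : ∃ (a : Fin d → ℝ) (w : ℝ), ∀ p ∈ S,
      (p.2 = true → w ≤ ∑ j, a j * (p.1 j : ℝ)) ∧
      (p.2 = false → ∑ j, a j * (p.1 j : ℝ) < w)) :
    ∃ (a : Fin d → ℝ) (w : ℝ),
      (∀ p ∈ S,
        (p.2 = true → w ≤ ∑ j, a j * (p.1 j : ℝ)) ∧
        (p.2 = false → ∑ j, a j * (p.1 j : ℝ) < w)) ∧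
      (∀ p ∈ S, ∀ y : Fin d → ℝ, (∑ j, a j * y j) = w →
        (1 : ℝ) / (2 * (d : ℝ) ^ 2 * (Nat.factorial d : ℝ) ^ (d ^ 3) * (X : ℝ) ^ (d ^ 6))
          ≤ Real.sqrt (∑ j, ((p.1 j : ℝ) - y j) ^ 2)) := by
  classical
  rcases Nat.eq_zero_or_pos d with hd0 | hd1
  · obtain ⟨a, w, h⟩ := hrealizable
    refine ⟨a, w, h, fun p hp y hy => ?_⟩
    have hz : (2 * (d : ℝ) ^ 2 * (Nat.factorial d : ℝ) ^ (d ^ 3) * (X : ℝ) ^ (d ^ 6)) = 0 := by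
      subst hd0; norm_num
    rw [hz, div_zero]
    exact Real.sqrt_nonneg _
  rcases Nat.eq_zero_or_pos X with hX0 | hX1
  · obtain ⟨a, w, h⟩ := hrealizable
    refine ⟨a, w, h, fun p hp y hy => ?_⟩
    have hz : (2 * (d : ℝ) ^ 2 * (Nat.factorial d : ℝ) ^ (d ^ 3) * (X : ℝ) ^ (d ^ 6)) = 0 := by
      subst hX0
      have : d ^ 6 ≠ 0 := by positivity
      norm_num [zero_pow this]
    rw [hz, div_zero]
    exact Real.sqrt_nonneg _
  rcases eq_or_lt_of_le (Nat.succ_le_of_lt hd1) with hd1' | hd2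
  · -- dimension 1
    have hd : d = 1 := hd1'.symm
    subst hd
    obtain ⟨a0, w0, h0⟩ := hrealizable
    have hsep : ∃ σ : ℤ, (σ = 1 ∨ σ = -1) ∧
        ∀ p ∈ S, ∀ q ∈ S, p.2 = true → q.2 = false → σ * q.1 0 < σ * p.1 0 := by
      rcases lt_trichotomy (a0 0) 0 with hneg | hzero | hpos
      · refine ⟨-1, Or.inr rfl, fun p hp q hq hpt hqf => ?_⟩
        have h1 := (h0 p hp).1 hpt
        have h2 := (h0 q hq).2 hqf
        rw [Fin.sum_univ_one] at h1 h2
        have hpq : (p.1 0 : ℝ) < (q.1 0 : ℝ) := by nlinarith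
        have hpq' : (p.1 0 : ℤ) < q.1 0 := by exact_mod_cast hpq
        linarith
      · refine ⟨1, Or.inl rfl, fun p hp q hq hpt hqf => ?_⟩
        exfalso
        have h1 := (h0 p hp).1 hpt
        have h2 := (h0 q hq).2 hqf
        rw [Fin.sum_univ_one, hzero] at h1 h2
        simp at h1 h2
        linarith
      · refine ⟨1, Or.inl rfl, fun p hp q hq hpt hqf => ?_⟩
        have h1 := (h0 p hp).1 hpt
        have h2 := (h0 q hq).2 hqf
        rw [Fin.sum_univ_one] at h1 h2
        have hpq : (q.1 0 : ℝ) < (p.1 0 : ℝ) := by nlinarith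
        have hpq' : (q.1 0 : ℤ) < p.1 0 := by exact_mod_cast hpq
        linarith
    obtain ⟨σ, hσ, hsep⟩ := hsep
    have hσabs : |σ| = 1 := by rcases hσ with h | h <;> simp [h]
    set F := S.toFinset.filter (fun p => p.2 = false) with hF
    set M : ℤ := if h : F.Nonempty then F.sup' h (fun p => σ * p.1 0) else -(X:ℤ) - 1 with hM
    have hMfalse : ∀ p ∈ S, p.2 = false → σ * p.1 0 ≤ M := by
      intro p hp hpf
      have hpF : p ∈ F := Finset.mem_filter.mpr ⟨Multiset.mem_toFinset.mpr hp, hpf⟩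
      rw [hM, dif_pos ⟨p, hpF⟩]
      exact Finset.le_sup' (fun p => σ * p.1 0) hpF
    have hMtrue : ∀ p ∈ S, p.2 = true → M + 1 ≤ σ * p.1 0 := by
      intro p hp hpt
      by_cases h : F.Nonempty
      · obtain ⟨q, hqF, hqe⟩ := Finset.exists_mem_eq_sup' h (fun p => σ * p.1 0)
        rw [Finset.mem_filter, Multiset.mem_toFinset] at hqF
        have := hsep p hp q hqF.1 hpt hqF.2
        rw [hM, dif_pos h, hqe]
        omega
      · rw [hM, dif_neg h]
        have h1 : |σ * p.1 0| ≤ (X:ℤ) := by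
          rw [abs_mul, hσabs, one_mul]; exact hgrid p hp 0
        have := abs_le.mp h1
        omega
    refine ⟨fun _ => (σ:ℝ), (M:ℝ) + 1/2, fun p hp => ⟨?_, ?_⟩, ?_⟩
    · intro hpt
      rw [Fin.sum_univ_one]
      have h1 : ((M:ℝ) + 1 ≤ (σ:ℝ) * ((p.1 0 : ℤ):ℝ)) := by exact_mod_cast hMtrue p hp hpt
      linarith
    · intro hpf
      rw [Fin.sum_univ_one]
      have h1 : ((σ:ℝ) * ((p.1 0 : ℤ):ℝ) ≤ (M:ℝ)) := by exact_mod_cast hMfalse p hp hpf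
      linarith
    · intro p hp y hy
      rw [Fin.sum_univ_one] at hy
      rw [Fin.sum_univ_one, Real.sqrt_sq_eq_abs]
      have habs : |(p.1 0:ℝ) - y 0| = |(σ:ℝ) * (p.1 0:ℝ) - (σ:ℝ) * y 0| := by
        rw [← mul_sub, abs_mul]
        have : |(σ:ℝ)| = 1 := by exact_mod_cast hσabs
        rw [this, one_mul]
      have h2 : (1:ℝ)/2 ≤ |(p.1 0:ℝ) - y 0| := by
        rw [habs, hy]
        have h3 := half_int_dist (σ * p.1 0) M
        push_cast at h3
        exact h3
      have hXr : (1:ℝ) ≤ (X:ℝ) := by exact_mod_cast hX1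
      calc (1 : ℝ) / (2 * ((1:ℕ) : ℝ) ^ 2 * (Nat.factorial 1 : ℝ) ^ (1 ^ 3) * (X : ℝ) ^ (1 ^ 6))
          = 1 / (2 * (X:ℝ)) := by norm_num [Nat.factorial]
        _ ≤ 1 / 2 := one_div_le_one_div_of_le (by norm_num) (by linarith)
        _ ≤ |(p.1 0:ℝ) - y 0| := h2
  · -- main case : 2 ≤ d, 1 ≤ X
    set V : Finset (Fin (d+1) → ℤ) := S.toFinset.image fvec with hV
    have hVB : ∀ v ∈ V, ∀ j, |v j| ≤ (X:ℤ) := by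
      intro v hv j
      obtain ⟨p, hp, rfl⟩ := Finset.mem_image.mp hv
      have hp' : p ∈ S := Multiset.mem_toFinset.mp hp
      show |(if p.2 then (1:ℤ) else -1) * (Fin.snoc p.1 1 : Fin (d+1) → ℤ) j| ≤ (X:ℤ)
      rw [abs_mul]
      have h1 : |if p.2 then (1:ℤ) else -1| = 1 := by split <;> norm_num
      rw [h1, one_mul]
      refine Fin.lastCases ?_ ?_ j
      · rw [Fin.snoc_last]
        simpa using (by exact_mod_cast hX1 : (1:ℤ) ≤ (X:ℤ))
      · intro i
        rw [Fin.snoc_castSucc]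
        exact hgrid p hp' i
    have hfeasV : ∃ b : Fin (d+1) → ℝ, ∀ v ∈ V, 1 ≤ ∑ j, b j * (v j : ℝ) := by
      obtain ⟨a0, w0, h0⟩ := hrealizable
      have hw' : ∃ w' : ℝ, ∀ p ∈ S,
          (p.2 = true → w' < ∑ j, a0 j * (p.1 j : ℝ)) ∧
          (p.2 = false → ∑ j, a0 j * (p.1 j : ℝ) < w') := by
        by_cases hFne : (S.toFinset.filter (fun p => p.2 = false)).Nonempty
        · have hm : (S.toFinset.filter (fun p => p.2 = false)).sup' hFne
              (fun p => ∑ j, a0 j * (p.1 j : ℝ)) < w0 := by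
            rw [Finset.sup'_lt_iff]
            intro q hq
            rw [Finset.mem_filter, Multiset.mem_toFinset] at hq
            exact (h0 q hq.1).2 hq.2
          refine ⟨(w0 + (S.toFinset.filter (fun p => p.2 = false)).sup' hFne
              (fun p => ∑ j, a0 j * (p.1 j : ℝ)))/2, fun p hp => ⟨?_, ?_⟩⟩
          · intro hpt
            have := (h0 p hp).1 hpt
            linarith
          · intro hpf
            have hle : ∑ j, a0 j * (p.1 j : ℝ) ≤ (S.toFinset.filter (fun p => p.2 = false)).sup'
                hFne (fun p => ∑ j, a0 j * (p.1 j : ℝ)) :=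
              Finset.le_sup' (fun p => ∑ j, a0 j * (p.1 j : ℝ))
                (Finset.mem_filter.mpr ⟨Multiset.mem_toFinset.mpr hp, hpf⟩)
            linarith
        · refine ⟨w0 - 1, fun p hp => ⟨?_, ?_⟩⟩
          · intro hpt
            have := (h0 p hp).1 hpt
            linarith
          · intro hpf
            exact absurd ⟨p, Finset.mem_filter.mpr ⟨Multiset.mem_toFinset.mpr hp, hpf⟩⟩ hFne
      obtain ⟨w', hw'⟩ := hw'
      have hval : ∀ p ∈ S, 0 < ∑ j, (Fin.snoc a0 (-w') : Fin (d+1) → ℝ) j * (fvec p j : ℝ) := by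
        intro p hp
        rw [fvec_sum]
        have hc : ∑ i, (Fin.snoc a0 (-w') : Fin (d+1) → ℝ) (Fin.castSucc i) * (p.1 i : ℝ)
            = ∑ i, a0 i * (p.1 i : ℝ) :=
          Finset.sum_congr rfl fun i _ => by rw [Fin.snoc_castSucc]
        have hl : (Fin.snoc a0 (-w') : Fin (d+1) → ℝ) (Fin.last d) = -w' := Fin.snoc_last _ _
        rw [hc, hl]
        cases hpb : p.2
        · have := (hw' p hp).2 hpb
          norm_num
          linarith
        · have := (hw' p hp).1 hpb
          norm_num
          linarith
      by_cases hSne : S.toFinset.Nonempty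
      · set ε := S.toFinset.inf' hSne
          (fun p => ∑ j, (Fin.snoc a0 (-w') : Fin (d+1) → ℝ) j * (fvec p j : ℝ)) with hε
        have hεpos : 0 < ε := by
          rw [hε, Finset.lt_inf'_iff]
          intro p hp
          exact hval p (Multiset.mem_toFinset.mp hp)
        refine ⟨fun j => ε⁻¹ * (Fin.snoc a0 (-w') : Fin (d+1) → ℝ) j, fun v hv => ?_⟩
        obtain ⟨p, hp, rfl⟩ := Finset.mem_image.mp hv
        have h1 : ε ≤ ∑ j, (Fin.snoc a0 (-w') : Fin (d+1) → ℝ) j * (fvec p j : ℝ) :=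
          Finset.inf'_le _ hp
        have h2 : ∑ j, (ε⁻¹ * (Fin.snoc a0 (-w') : Fin (d+1) → ℝ) j) * (fvec p j : ℝ)
            = ε⁻¹ * ∑ j, (Fin.snoc a0 (-w') : Fin (d+1) → ℝ) j * (fvec p j : ℝ) := by
          rw [Finset.mul_sum]
          exact Finset.sum_congr rfl fun j _ => by ring
        rw [h2]
        have h3 : (1:ℝ) ≤ (∑ j, (Fin.snoc a0 (-w') : Fin (d+1) → ℝ) j * (fvec p j : ℝ)) / ε :=
          (one_le_div hεpos).mpr h1
        rw [div_eq_inv_mul] at h3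
        exact h3
      · refine ⟨fun _ => 0, fun v hv => ?_⟩
        obtain ⟨p, hp, _⟩ := Finset.mem_image.mp hv
        exact absurd ⟨p, hp⟩ hSne
    obtain ⟨b, hbfeas, hbbound⟩ := exists_bounded_solution hX1 V hVB hfeasV
    have hmem : ∀ p ∈ S, fvec p ∈ V := fun p hp =>
      Finset.mem_image_of_mem _ (Multiset.mem_toFinset.mpr hp)
    refine ⟨fun i => b (Fin.castSucc i), -(b (Fin.last d)), fun p hp => ⟨?_, ?_⟩, ?_⟩
    · intro hpt
      have h1 := hbfeas (fvec p) (hmem p hp)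
      rw [fvec_sum] at h1
      rw [hpt] at h1
      norm_num at h1
      linarith
    · intro hpf
      have h1 := hbfeas (fvec p) (hmem p hp)
      rw [fvec_sum] at h1
      rw [hpf] at h1
      norm_num at h1
      linarith
    · intro p hp y hy
      have h1 := hbfeas (fvec p) (hmem p hp)
      rw [fvec_sum] at h1
      have hone : 1 ≤ |∑ i, b (Fin.castSucc i) * (p.1 i : ℝ) + b (Fin.last d)| := by
        cases hpb : p.2
        · rw [hpb] at h1
          norm_num at h1
          linarith [neg_abs_le (∑ i, b (Fin.castSucc i) * (p.1 i : ℝ) + b (Fin.last d))]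
        · rw [hpb] at h1
          norm_num at h1
          linarith [le_abs_self (∑ i, b (Fin.castSucc i) * (p.1 i : ℝ) + b (Fin.last d))]
      have hsub : ∑ i, b (Fin.castSucc i) * (p.1 i : ℝ) + b (Fin.last d)
          = ∑ i, b (Fin.castSucc i) * ((p.1 i : ℝ) - y i) := by
        have h2 : ∑ i, b (Fin.castSucc i) * ((p.1 i : ℝ) - y i)
            = ∑ i, b (Fin.castSucc i) * (p.1 i : ℝ) - ∑ i, b (Fin.castSucc i) * y i := by
          rw [← Finset.sum_sub_distrib]
          exact Finset.sum_congr rfl fun i _ => by ring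
        rw [h2, hy]
        ring
      have hcs : |∑ i, b (Fin.castSucc i) * ((p.1 i : ℝ) - y i)|
          ≤ Real.sqrt (∑ i, (b (Fin.castSucc i))^2) * Real.sqrt (∑ i, ((p.1 i : ℝ) - y i)^2) := by
        refine abs_le.mpr ⟨?_, Real.sum_mul_le_sqrt_mul_sqrt _ _ _⟩
        have h2 := Real.sum_mul_le_sqrt_mul_sqrt Finset.univ
          (fun i => b (Fin.castSucc i)) (fun i => y i - (p.1 i : ℝ))
        have h3 : ∑ i, (y i - (p.1 i : ℝ))^2 = ∑ i, ((p.1 i : ℝ) - y i)^2 :=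
          Finset.sum_congr rfl fun i _ => by ring
        have h4 : ∑ i, b (Fin.castSucc i) * (y i - (p.1 i : ℝ))
            = -∑ i, b (Fin.castSucc i) * ((p.1 i : ℝ) - y i) := by
          rw [← Finset.sum_neg_distrib]
          exact Finset.sum_congr rfl fun i _ => by ring
        rw [h3, h4] at h2
        linarith
      set K : ℕ := (d+1) * Nat.factorial (d+1) * ((d+1) * X^2)^(d+1) * X with hK
      have hKpos : 0 < K := by
        rw [hK]
        have hXpos : 0 < X := hX1
        exact Nat.mul_pos (Nat.mul_pos (Nat.mul_pos (Nat.succ_pos d) (Nat.factorial_pos _))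
          (pow_pos (Nat.mul_pos (Nat.succ_pos d) (pow_pos hXpos 2)) _)) hXpos
      have hnorm : Real.sqrt (∑ i, (b (Fin.castSucc i))^2) ≤ ((d * K : ℕ) : ℝ) := by
        have h5a : ∀ i : Fin d, (b (Fin.castSucc i))^2 ≤ ((K:ℕ):ℝ)^2 := by
          intro i
          have h6 := hbbound (Fin.castSucc i)
          nlinarith [abs_nonneg (b (Fin.castSucc i)), sq_abs (b (Fin.castSucc i))]
        have h5 : ∑ i, (b (Fin.castSucc i))^2 ≤ (d:ℝ) * ((K:ℕ):ℝ)^2 := by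
          calc ∑ i, (b (Fin.castSucc i))^2
              ≤ ∑ _i : Fin d, ((K:ℕ):ℝ)^2 := Finset.sum_le_sum fun i _ => h5a i
            _ = (d:ℝ) * ((K:ℕ):ℝ)^2 := by
                rw [Finset.sum_const, Finset.card_univ, Fintype.card_fin, nsmul_eq_mul]
        have hd1r : (1:ℝ) ≤ (d:ℝ) := by exact_mod_cast hd1
        calc Real.sqrt (∑ i, (b (Fin.castSucc i))^2)
            ≤ Real.sqrt (((d * K : ℕ):ℝ)^2) := by
              apply Real.sqrt_le_sqrt
              push_cast
              nlinarith [sq_nonneg ((K:ℕ):ℝ), Nat.cast_nonneg (α := ℝ) K]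
          _ = ((d * K : ℕ):ℝ) := Real.sqrt_sq (by positivity)
      have hdKpos : (0:ℝ) < ((d * K : ℕ):ℝ) := by
        have : 0 < d * K := Nat.mul_pos hd1 hKpos
        exact_mod_cast this
      have hfinal : 1 ≤ ((d * K : ℕ):ℝ) * Real.sqrt (∑ i, ((p.1 i : ℝ) - y i)^2) := by
        calc (1:ℝ) ≤ |∑ i, b (Fin.castSucc i) * (p.1 i : ℝ) + b (Fin.last d)| := hone
          _ = |∑ i, b (Fin.castSucc i) * ((p.1 i : ℝ) - y i)| := by rw [hsub]
          _ ≤ Real.sqrt (∑ i, (b (Fin.castSucc i))^2) *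
              Real.sqrt (∑ i, ((p.1 i : ℝ) - y i)^2) := hcs
          _ ≤ ((d * K : ℕ):ℝ) * Real.sqrt (∑ i, ((p.1 i : ℝ) - y i)^2) :=
              mul_le_mul_of_nonneg_right hnorm (Real.sqrt_nonneg _)
      have hchain : ((d * K : ℕ):ℝ)
          ≤ 2 * (d : ℝ) ^ 2 * (Nat.factorial d : ℝ) ^ (d ^ 3) * (X : ℝ) ^ (d ^ 6) := by
        have hnb := nat_bound hd2 hX1
        calc ((d * K : ℕ):ℝ)
            ≤ ((2 * d^2 * (d.factorial)^(d^3) * X^(d^6) : ℕ):ℝ) := by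
              apply Nat.cast_le.mpr
              rw [hK]
              exact hnb
          _ = 2 * (d : ℝ) ^ 2 * (Nat.factorial d : ℝ) ^ (d ^ 3) * (X : ℝ) ^ (d ^ 6) := by
              push_cast
              ring
      calc (1 : ℝ) / (2 * (d : ℝ) ^ 2 * (Nat.factorial d : ℝ) ^ (d ^ 3) * (X : ℝ) ^ (d ^ 6))
          ≤ 1 / ((d * K : ℕ):ℝ) := one_div_le_one_div_of_le hdKpos hchain
        _ ≤ Real.sqrt (∑ i, ((p.1 i : ℝ) - y i)^2) := by
            rw [div_le_iff₀ hdKpos]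
            linarith
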